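/- Let U ⊂ ℝᵈ be open and arc-connected, and let (g_n) be a sequence of L-Lipschitz functions U → ℝᵈ such that each g_n = ∇φ_n for some C¹ ℓ-strongly convex function φ_n: U → ℝ. If (g_n) converges locally uniformly on U to a function g, then g is L-Lipschitz and there exists a C¹ ℓ-strongly convex function ψ: U → ℝ with g = ∇ψ on U. -/

import Mathlib

set_option maxHeartbeats 1000000


open Set Filter
open scoped NNReal Topology RealInnerProductSpace

/-- A set A ⊂ ℝᵈ is (Lipschitz-)arc-connected if any two of its points can be
joined by a Lipschitz curve contained in A. -/
def LipArcConnected {d : ℕ} (A : Set (EuclideanSpace ℝ (Fin d))) : Prop :=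
  ∀ x ∈ A, ∀ y ∈ A, ∃ (K : ℝ≥0) (w : ℝ → EuclideanSpace ℝ (Fin d)),
    LipschitzOnWith K w (Set.Icc 0 1) ∧ w 0 = x ∧ w 1 = y ∧
    ∀ t ∈ Set.Icc (0:ℝ) 1, w t ∈ A

/-- Closedness under local uniform limits of L-Lipschitz gradients of C¹
ℓ-strongly convex potentials on an open arc-connected set U ⊂ ℝᵈ. -/
theorem limit_of_gradients_of_strongly_convex {d : ℕ}
    (U : Set (EuclideanSpace ℝ (Fin d))) (hUopen : IsOpen U)
    (hUconn : LipArcConnected U) (L : ℝ≥0) (ℓ : ℝ) (hℓ : 0 ≤ ℓ)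
    (g : ℕ → EuclideanSpace ℝ (Fin d) → EuclideanSpace ℝ (Fin d))
    (φ : ℕ → EuclideanSpace ℝ (Fin d) → ℝ)
    (hlip : ∀ n, LipschitzOnWith L (g n) U)
    (hC1 : ∀ n, ContDiffOn ℝ 1 (φ n) U)
    (hsc : ∀ n, StrongConvexOn U ℓ (φ n))
    (hgrad : ∀ n, ∀ x ∈ U, g n x = gradient (φ n) x)
    (glim : EuclideanSpace ℝ (Fin d) → EuclideanSpace ℝ (Fin d))
    (hconv : TendstoLocallyUniformlyOn g glim atTop U) :
    LipschitzOnWith L glim U ∧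
    ∃ ψ : EuclideanSpace ℝ (Fin d) → ℝ, ContDiffOn ℝ 1 ψ U ∧
      StrongConvexOn U ℓ ψ ∧ ∀ x ∈ U, glim x = gradient ψ x := by
  let E' := EuclideanSpace ℝ (Fin d)
  -- pointwise convergence on U
  have hpt : ∀ x ∈ U, Tendsto (fun n => g n x) atTop (𝓝 (glim x)) :=
    fun x hx => hconv.tendsto_at hx
  -- Part 1: the limit is L-Lipschitz on U
  have hglip : LipschitzOnWith L glim U := by
    rw [lipschitzOnWith_iff_dist_le_mul]
    intro x hx y hy
    refine le_of_tendsto_of_tendsto' ((hpt x hx).dist (hpt y hy))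
      tendsto_const_nhds (fun n => ?_)
    exact (hlip n).dist_le_mul x hx y hy
  refine ⟨hglip, ?_⟩
  -- the empty case
  rcases eq_empty_or_nonempty U with rfl | ⟨x0, hx0⟩
  · exact ⟨fun _ => 0, contDiffOn_const,
      ⟨convex_empty, fun x hx => absurd hx (notMem_empty x)⟩,
      fun x hx => absurd hx (notMem_empty x)⟩
  -- U is convex, since the φₙ are strongly convex on U
  have hUconv : Convex ℝ U := (hsc 0).1
  have hglimc : ContinuousOn glim U := hglip.continuousOn
  -- differentiability of φₙ with derivative given by gₙ
  have hdiff : ∀ n, ∀ x ∈ U, HasFDerivAt (φ n)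
      (InnerProductSpace.toDual ℝ E' (g n x)) x := by
    intro n x hx
    have h1 : DifferentiableAt ℝ (φ n) x :=
      ((hC1 n).contDiffAt (hUopen.mem_nhds hx)).differentiableAt one_ne_zero
    have h2 := h1.hasGradientAt
    rw [← hgrad n x hx] at h2
    exact hasGradientAt_iff_hasFDerivAt.mp h2
  -- membership of segments
  have hseg : ∀ a ∈ U, ∀ b ∈ U, ∀ t ∈ Icc (0:ℝ) 1, a + t • (b - a) ∈ U :=
    fun a ha b hb t ht => hUconv.add_smul_sub_mem ha hb ht
  -- FTC along segments for φₙ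
  have key : ∀ n, ∀ a ∈ U, ∀ b ∈ U,
      φ n b - φ n a = ∫ t in (0:ℝ)..1, ⟪g n (a + t • (b - a)), b - a⟫ := by
    intro n a ha b hb
    have hmem : ∀ t ∈ uIcc (0:ℝ) 1, a + t • (b - a) ∈ U := by
      rw [uIcc_of_le (zero_le_one)]
      exact hseg a ha b hb
    have hd : ∀ t ∈ uIcc (0:ℝ) 1,
        HasDerivAt (fun t : ℝ => φ n (a + t • (b - a)))
          (⟪g n (a + t • (b - a)), b - a⟫) t := by
      intro t ht
      have hγ : HasDerivAt (fun t : ℝ => a + t • (b - a)) (b - a) t := by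
        simpa using ((hasDerivAt_id t).smul_const (b - a)).const_add a
      have := (hdiff n _ (hmem t ht)).comp_hasDerivAt t hγ
      exact this
    have hcont : ContinuousOn (fun t : ℝ => ⟪g n (a + t • (b - a)), b - a⟫)
        (uIcc (0:ℝ) 1) := by
      refine ContinuousOn.inner ?_ continuousOn_const
      exact (hlip n).continuousOn.comp
        (Continuous.continuousOn (continuous_const.add (continuous_id.smul continuous_const))) hmem
    rw [intervalIntegral.integral_eq_sub_of_hasDerivAt hd
      hcont.intervalIntegrable]
    simp
  -- uniform convergence on compact subsets of U
  have hUC : ∀ K ⊆ U, IsCompact K → TendstoUniformlyOn g glim atTop K :=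
    (tendstoLocallyUniformlyOn_iff_forall_isCompact hUopen).mp hconv
  -- continuity of the limit integrand
  have hglimint : ∀ a ∈ U, ∀ b ∈ U,
      ContinuousOn (fun t : ℝ => ⟪glim (a + t • (b - a)), b - a⟫)
        (uIcc (0:ℝ) 1) := by
    intro a ha b hb
    have hmem : ∀ t ∈ uIcc (0:ℝ) 1, a + t • (b - a) ∈ U := by
      rw [uIcc_of_le (zero_le_one)]; exact hseg a ha b hb
    exact ContinuousOn.inner
      (hglimc.comp (Continuous.continuousOn (continuous_const.add (continuous_id.smul continuous_const))) hmem)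
      continuousOn_const
  -- limit of the segment increments
  have keylim : ∀ a ∈ U, ∀ b ∈ U,
      Tendsto (fun n => φ n b - φ n a) atTop
        (𝓝 (∫ t in (0:ℝ)..1, ⟪glim (a + t • (b - a)), b - a⟫)) := by
    intro a ha b hb
    have hmemIcc : ∀ t ∈ Icc (0:ℝ) 1, a + t • (b - a) ∈ U := hseg a ha b hb
    have hmem : ∀ t ∈ uIcc (0:ℝ) 1, a + t • (b - a) ∈ U := by
      rw [uIcc_of_le (zero_le_one)]; exact hmemIcc
    set K : Set E' := (fun t : ℝ => a + t • (b - a)) '' Icc 0 1 with hK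
    have hKc : IsCompact K := isCompact_Icc.image (continuous_const.add (continuous_id.smul continuous_const))
    have hKU : K ⊆ U := by
      rintro _ ⟨t, ht, rfl⟩; exact hmemIcc t ht
    have hunif := hUC K hKU hKc
    rw [Metric.tendstoUniformlyOn_iff] at hunif
    have hmain : Tendsto
        (fun n => ∫ t in (0:ℝ)..1, ⟪g n (a + t • (b - a)), b - a⟫) atTop
        (𝓝 (∫ t in (0:ℝ)..1, ⟪glim (a + t • (b - a)), b - a⟫)) := by
      rw [Metric.tendsto_atTop]
      intro ε hε
      have hδ : (0:ℝ) < ε / (‖b - a‖ + 1) := by positivity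
      obtain ⟨N, hN⟩ := eventually_atTop.mp (hunif _ hδ)
      refine ⟨N, fun n hn => ?_⟩
      have hfn : IntervalIntegrable
          (fun t : ℝ => ⟪g n (a + t • (b - a)), b - a⟫)
          MeasureTheory.volume 0 1 := by
        refine (ContinuousOn.inner ((hlip n).continuousOn.comp
          (Continuous.continuousOn (continuous_const.add (continuous_id.smul continuous_const))) hmem)
          continuousOn_const).intervalIntegrable
      have hf : IntervalIntegrable
          (fun t : ℝ => ⟪glim (a + t • (b - a)), b - a⟫)
          MeasureTheory.volume 0 1 :=
        (hglimint a ha b hb).intervalIntegrable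
      rw [Real.dist_eq, ← intervalIntegral.integral_sub hfn hf]
      have hb1 : ∀ t ∈ Set.uIoc (0:ℝ) 1,
          ‖⟪g n (a + t • (b - a)), b - a⟫ - ⟪glim (a + t • (b - a)), b - a⟫‖
            ≤ (ε / (‖b - a‖ + 1)) * ‖b - a‖ := by
        intro t ht
        have htI : t ∈ Icc (0:ℝ) 1 := by
          rw [uIoc_of_le (zero_le_one)] at ht
          exact Ioc_subset_Icc_self ht
        have hmemt : a + t • (b - a) ∈ K := ⟨t, htI, rfl⟩
        have hdist := hN n hn _ hmemt
        calc ‖⟪g n (a + t • (b - a)), b - a⟫ - ⟪glim (a + t • (b - a)), b - a⟫‖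
            = ‖⟪g n (a + t • (b - a)) - glim (a + t • (b - a)), b - a⟫‖ := by
              rw [← inner_sub_left]
          _ ≤ ‖g n (a + t • (b - a)) - glim (a + t • (b - a))‖ * ‖b - a‖ :=
              norm_inner_le_norm _ _
          _ ≤ (ε / (‖b - a‖ + 1)) * ‖b - a‖ := by
              refine mul_le_mul_of_nonneg_right ?_ (norm_nonneg _)
              rw [← dist_eq_norm, dist_comm]
              exact le_of_lt hdist
      have hnorm := intervalIntegral.norm_integral_le_of_norm_le_const hb1
      have hfin : (ε / (‖b - a‖ + 1)) * ‖b - a‖ * |(1:ℝ) - 0| < ε := by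
        have h0 : (0:ℝ) ≤ ‖b - a‖ := norm_nonneg _
        rw [show |(1:ℝ) - 0| = 1 by norm_num, mul_one, div_mul_eq_mul_div,
          div_lt_iff₀ (by positivity)]
        nlinarith
      calc |∫ t in (0:ℝ)..1,
          (⟪g n (a + t • (b - a)), b - a⟫ - ⟪glim (a + t • (b - a)), b - a⟫)|
          ≤ (ε / (‖b - a‖ + 1)) * ‖b - a‖ * |(1:ℝ) - 0| := hnorm
        _ < ε := hfin
    exact hmain.congr (fun n => (key n a ha b hb).symm)
  -- the candidate potential
  set ψ : E' → ℝ := fun x => ∫ t in (0:ℝ)..1, ⟪glim (x0 + t • (x - x0)), x - x0⟫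
    with hψdef
  have hψlim : ∀ x ∈ U, Tendsto (fun n => φ n x - φ n x0) atTop (𝓝 (ψ x)) :=
    fun x hx => keylim x0 hx0 x hx
  -- FTC identity for ψ on segments in U
  have hψseg : ∀ a ∈ U, ∀ b ∈ U,
      ψ b - ψ a = ∫ t in (0:ℝ)..1, ⟪glim (a + t • (b - a)), b - a⟫ := by
    intro a ha b hb
    have h1 : Tendsto (fun n => φ n b - φ n a) atTop (𝓝 (ψ b - ψ a)) :=
      (((hψlim b hb).sub (hψlim a ha)).congr (fun n => by ring))
    exact tendsto_nhds_unique h1 (keylim a ha b hb)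
  -- differentiability of ψ with gradient glim
  have hψderiv : ∀ x ∈ U, HasFDerivAt ψ
      (InnerProductSpace.toDual ℝ E' (glim x)) x := by
    intro x hx
    rw [hasFDerivAt_iff_isLittleO_nhds_zero, Asymptotics.isLittleO_iff]
    intro c hc
    have hU' : (fun h : E' => x + h) ⁻¹' U ∈ 𝓝 (0:E') :=
      (continuous_const.add continuous_id).continuousAt.preimage_mem_nhds
        (by simpa using hUopen.mem_nhds hx)
    have hpos : (0:ℝ) < c / ((L:ℝ) + 1) := by positivity
    have hsmall : ∀ᶠ h : E' in 𝓝 0, ‖h‖ < c / ((L:ℝ) + 1) := by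
      filter_upwards [Metric.ball_mem_nhds (0:E') hpos] with h hh
      simpa using hh
    filter_upwards [hU', hsmall] with h hxh hhn
    have hxh' : x + h ∈ U := hxh
    have heq : ψ (x + h) - ψ x = ∫ t in (0:ℝ)..1, ⟪glim (x + t • h), h⟫ := by
      have := hψseg x hx (x + h) hxh'
      simpa [add_sub_cancel_left] using this
    have heq2 : (InnerProductSpace.toDual ℝ E' (glim x)) h
        = ∫ t in (0:ℝ)..1, ⟪glim x, h⟫ := by
      rw [intervalIntegral.integral_const, InnerProductSpace.toDual_apply_apply]
      simp only [sub_zero, one_smul]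
    have hint1 : IntervalIntegrable (fun t : ℝ => ⟪glim (x + t • h), h⟫)
        MeasureTheory.volume 0 1 := by
      have h1 : IntervalIntegrable
          (fun t : ℝ => ⟪glim (x + t • ((x + h) - x)), (x + h) - x⟫)
          MeasureTheory.volume 0 1 :=
        (hglimint x hx (x + h) hxh').intervalIntegrable
      simpa [add_sub_cancel_left] using h1
    have hint2 : IntervalIntegrable (fun _ : ℝ => ⟪glim x, h⟫)
        MeasureTheory.volume 0 1 := intervalIntegrable_const
    have hbound : ∀ t ∈ Set.uIoc (0:ℝ) 1,
        ‖⟪glim (x + t • h), h⟫ - ⟪glim x, h⟫‖ ≤ c * ‖h‖ := by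
      intro t ht
      have htI : t ∈ Icc (0:ℝ) 1 := by
        rw [uIoc_of_le (zero_le_one)] at ht
        exact Ioc_subset_Icc_self ht
      have hmemt : x + t • h ∈ U := by
        have := hseg x hx (x + h) hxh' t htI
        simpa [add_sub_cancel_left] using this
      have hlipd : dist (glim (x + t • h)) (glim x) ≤ (L:ℝ) * dist (x + t • h) x :=
        hglip.dist_le_mul _ hmemt _ hx
      have hdd : dist (x + t • h) x ≤ ‖h‖ := by
        rw [dist_eq_norm]
        simp only [add_sub_cancel_left]
        calc ‖t • h‖ = |t| * ‖h‖ := by rw [norm_smul, Real.norm_eq_abs]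
          _ ≤ 1 * ‖h‖ := by
              refine mul_le_mul_of_nonneg_right ?_ (norm_nonneg _)
              rw [abs_le]; exact ⟨by linarith [htI.1], htI.2⟩
          _ = ‖h‖ := one_mul _
      have hLh : (L:ℝ) * ‖h‖ ≤ c := by
        have := (lt_div_iff₀ (by positivity : (0:ℝ) < (L:ℝ) + 1)).mp hhn
        nlinarith [norm_nonneg h, L.coe_nonneg]
      calc ‖⟪glim (x + t • h), h⟫ - ⟪glim x, h⟫‖
          = ‖⟪glim (x + t • h) - glim x, h⟫‖ := by rw [← inner_sub_left]
        _ ≤ ‖glim (x + t • h) - glim x‖ * ‖h‖ := norm_inner_le_norm _ _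
        _ ≤ ((L:ℝ) * ‖h‖) * ‖h‖ := by
            refine mul_le_mul_of_nonneg_right ?_ (norm_nonneg _)
            rw [← dist_eq_norm]
            exact hlipd.trans (mul_le_mul_of_nonneg_left hdd L.coe_nonneg)
        _ ≤ c * ‖h‖ := mul_le_mul_of_nonneg_right hLh (norm_nonneg _)
    have : ‖ψ (x + h) - ψ x - (InnerProductSpace.toDual ℝ E' (glim x)) h‖
        ≤ c * ‖h‖ * |(1:ℝ) - 0| := by
      rw [show ψ (x + h) - ψ x - (InnerProductSpace.toDual ℝ E' (glim x)) h
          = (ψ (x + h) - ψ x) - (InnerProductSpace.toDual ℝ E' (glim x)) h by ring,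
        heq, heq2, ← intervalIntegral.integral_sub hint1 hint2]
      exact intervalIntegral.norm_integral_le_of_norm_le_const hbound
    calc ‖ψ (x + h) - ψ x - (InnerProductSpace.toDual ℝ E' (glim x)) h‖
        ≤ c * ‖h‖ * |(1:ℝ) - 0| := this
      _ = c * ‖h‖ := by norm_num
  have hψgrad : ∀ x ∈ U, gradient ψ x = glim x := fun x hx =>
    (hasGradientAt_iff_hasFDerivAt.mpr (hψderiv x hx)).gradient
  -- C¹ smoothness of ψ
  have hψdiffOn : DifferentiableOn ℝ ψ U := fun x hx =>
    ((hψderiv x hx).differentiableAt).differentiableWithinAt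
  have hψC1 : ContDiffOn ℝ 1 ψ U := by
    rw [show (1 : WithTop ℕ∞) = 0 + 1 by norm_num,
      contDiffOn_succ_iff_fderiv_of_isOpen hUopen]
    refine ⟨hψdiffOn, by simp, ?_⟩
    rw [contDiffOn_zero]
    have hcont : ContinuousOn (fun x => InnerProductSpace.toDual ℝ E' (glim x)) U :=
      (InnerProductSpace.toDual ℝ E').continuous.comp_continuousOn hglimc
    exact hcont.congr (fun x hx => (hψderiv x hx).fderiv)
  -- strong convexity of ψ
  have hψsc : StrongConvexOn U ℓ ψ := by
    refine ⟨hUconv, ?_⟩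
    intro x hx y hy a b ha hb hab
    have hz : a • x + b • y ∈ U := hUconv hx hy ha hb hab
    simp only [smul_eq_mul]
    refine le_of_tendsto_of_tendsto' (hψlim _ hz)
      ((((hψlim x hx).const_mul a).add ((hψlim y hy).const_mul b)).sub_const
        (a * b * (ℓ / 2 * ‖x - y‖ ^ 2))) (fun n => ?_)
    have hineq := (hsc n).2 hx hy ha hb hab
    simp only [smul_eq_mul] at hineq
    have hc0 : a * φ n x0 + b * φ n x0 = φ n x0 := by
      rw [← add_mul, hab, one_mul]
    linarith
  exact ⟨ψ, hψC1, hψsc, fun x hx => (hψgrad x hx).symm⟩
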